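/- Let μ be a σ-finite measure on X and let E be a complex Hilbert space. Suppose S : L²(X, μ; E) → L²(X, μ; E) is a norm-preserving, additive, conjugate-homogeneous (S(αf) = conj(α)·Sf) involution (S² = id) such that for every k ≥ 1 and every f ∈ L²(X, μ; E), S(χ_{X_k}·f) = χ_{X − X_k}·(Sf), where X_k = {x ∈ X : x_k = 1} and χ denotes indicator functions acting by pointwise multiplication. Then for every measurable set A ⊆ X and every f ∈ L²(X, μ; E), S(χ_A·f) = χ_{1−A}·(Sf), where 1−A = {1−x : x ∈ A}. -/

import Mathlib

/-!
Common setup: `GWX` is the compact abelian group `X = ∏_{k ≥ 1} {0,1}` of 0-1 sequences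
(with componentwise addition mod 2 and the product σ-algebra, which is generated by the
sets `X_k = {x : x_k = 1}`).  The coordinate `i : ℕ` of `x : GWX` represents the paper's
coordinate `x_{i+1}`, so the Lean index `k : ℕ` corresponds to the paper's index `k + 1`
throughout; in particular the paper's sign `(-1)^k` becomes `(-1)^(k+1)` here.
-/

open MeasureTheory Complex Filter
open scoped ENNReal

noncomputable section

abbrev GWX : Type := ℕ → ZMod 2

/-- `δ_k`: the sequence with `1` in the `k`-th place (the paper's `(k+1)`-th place)
and `0` elsewhere. -/
def gwDelta (k : ℕ) : GWX := fun i => if i = k then 1 else 0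

/-- The componentwise complement `x ↦ 1 - x`. -/
def gwFlip (x : GWX) : GWX := fun i => 1 - x i

/-- The sign `(-1)^{x_1 + ⋯ + x_{k-1} + 1}` of the paper, for the paper's index `k + 1`. -/
def gwSign (k : ℕ) (x : GWX) : ℂ := (-1 : ℂ) ^ ((∑ i ∈ Finset.range k, (x i).val) + 1)

open scoped Topology

/-! Auxiliary lemmas -/

lemma gwFlip_flip (x : GWX) : gwFlip (gwFlip x) = x := by
  funext i; simp only [gwFlip]; ring

lemma gwFlip_image (A : Set GWX) : gwFlip '' A = gwFlip ⁻¹' A :=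
  congrFun (Set.image_eq_preimage_of_inverse gwFlip_flip gwFlip_flip) A

lemma gwFlip_injective : Function.Injective gwFlip :=
  Function.LeftInverse.injective gwFlip_flip

lemma gwFlip_measurable : Measurable gwFlip :=
  measurable_pi_lambda _ fun i => measurable_from_top.comp (measurable_pi_apply i)

lemma gwFlip_image_compl (A : Set GWX) : gwFlip '' Aᶜ = (gwFlip '' A)ᶜ := by
  rw [gwFlip_image, gwFlip_image, Set.preimage_compl]

lemma gwFlip_image_inter (A B : Set GWX) :
    gwFlip '' (A ∩ B) = (gwFlip '' A) ∩ (gwFlip '' B) := by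
  rw [gwFlip_image, gwFlip_image, gwFlip_image, Set.preimage_inter]

lemma gwFlip_image_cyl (k : ℕ) :
    gwFlip '' {x : GWX | x k = 1} = {x : GWX | x k = 1}ᶜ := by
  rw [gwFlip_image]
  ext x
  have : ∀ a : ZMod 2, (1 - a = 1 ↔ ¬ a = 1) := by decide
  simpa [gwFlip, Set.mem_preimage] using this (x k)

def gwGen : Set (Set GWX) := {s | ∃ k : ℕ, s = {x : GWX | x k = 1}}

lemma gwGen_eq : (MeasurableSpace.pi : MeasurableSpace GWX) = .generateFrom gwGen := by
  apply le_antisymm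
  · show MeasurableSpace.pi ≤ _
    refine iSup_le fun i => ?_
    rintro s ⟨t, -, rfl⟩
    classical
    have hz : ∀ a : ZMod 2, a = 0 ∨ a = 1 := by decide
    have h1 : MeasurableSet[.generateFrom gwGen] {x : GWX | x i = 1} :=
      .basic _ ⟨i, rfl⟩
    have h0 : MeasurableSet[.generateFrom gwGen] {x : GWX | x i = 0} := by
      have he : {x : GWX | x i = 0} = {x : GWX | x i = 1}ᶜ := by
        ext x
        have : ∀ a : ZMod 2, (a = 0 ↔ ¬ a = 1) := by decide
        simpa using this (x i)
      rw [he]; exact h1.compl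
    have he : (fun x : GWX => x i) ⁻¹' t =
        ((if (0 : ZMod 2) ∈ t then {x : GWX | x i = 0} else ∅) ∪
         (if (1 : ZMod 2) ∈ t then {x : GWX | x i = 1} else ∅)) := by
      ext x
      rcases hz (x i) with h | h <;>
        by_cases ht0 : (0 : ZMod 2) ∈ t <;> by_cases ht1 : (1 : ZMod 2) ∈ t <;>
          simp [Set.mem_preimage, h, ht0, ht1]
    have hemp : MeasurableSet[MeasurableSpace.generateFrom gwGen] (∅ : Set GWX) :=
      @MeasurableSet.empty _ (.generateFrom gwGen)
    rw [he]
    split_ifs <;>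
      first
        | exact h0.union h1
        | exact h0.union hemp
        | exact hemp.union h1
        | exact hemp.union hemp
  · refine MeasurableSpace.generateFrom_le ?_
    rintro s ⟨k, rfl⟩
    have he : {x : GWX | x k = 1} = (fun x : GWX => x k) ⁻¹' {1} := rfl
    rw [he]
    exact (measurable_pi_apply k) (show MeasurableSet {(1 : ZMod 2)} from trivial)

/-- Dominated convergence for indicators in `L²`. -/
lemma gw_tendsto_ind {α : Type*} [MeasurableSpace α] {μ : Measure α}
    {E : Type*} [NormedAddCommGroup E]
    (u : α → E) (hu : MemLp u 2 μ) (C : ℕ → Set α) (hC : ∀ n, MeasurableSet (C n)) (hmono : Monotone C) :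
    Tendsto (fun n => eLpNorm ((⋃ i, C i).indicator u - (C n).indicator u) 2 μ)
      atTop (𝓝 0) := by
  set A := ⋃ i, C i with hA
  have hdiff : ∀ n, A.indicator u - (C n).indicator u = (A \ C n).indicator u := by
    intro n
    funext a
    rw [Pi.sub_apply]
    by_cases h1 : a ∈ C n
    · have h2 : a ∈ A := Set.mem_iUnion.2 ⟨n, h1⟩
      rw [Set.indicator_of_mem h2, Set.indicator_of_mem h1,
        Set.indicator_of_notMem (fun h => h.2 h1), sub_self]
    · rw [Set.indicator_of_notMem h1, sub_zero]
      by_cases h2 : a ∈ A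
      · rw [Set.indicator_of_mem h2, Set.indicator_of_mem (show a ∈ A \ C n from ⟨h2, h1⟩)]
      · rw [Set.indicator_of_notMem h2, Set.indicator_of_notMem (fun h => h2 h.1)]
  simp only [← hA, hdiff]
  have h2 : (2 : ℝ≥0∞) ≠ 0 := by norm_num
  have h2' : (2 : ℝ≥0∞) ≠ ∞ := by norm_num
  have hform : ∀ n, eLpNorm ((A \ C n).indicator u) 2 μ =
      (∫⁻ a, (A \ C n).indicator (fun a => (‖u a‖₊ : ℝ≥0∞) ^ (2 : ℝ)) a ∂μ) ^ (1 / (2 : ℝ)) := by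
    intro n
    rw [eLpNorm_eq_lintegral_rpow_enorm_toReal h2 h2']
    have h22 : ((2 : ℝ≥0∞)).toReal = (2 : ℝ) := by simp
    rw [h22]
    congr 1
    apply lintegral_congr
    intro a
    by_cases ha : a ∈ A \ C n <;>
      simp [ha, Set.indicator_of_mem, Set.indicator_of_notMem,
        ENNReal.zero_rpow_of_pos, enorm_eq_nnnorm]
  simp only [hform]
  have hlim : Tendsto
      (fun n => ∫⁻ a, (A \ C n).indicator (fun a => (‖u a‖₊ : ℝ≥0∞) ^ (2 : ℝ)) a ∂μ)
      atTop (𝓝 (∫⁻ a, (0 : ℝ≥0∞) ∂μ)) := by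
    apply tendsto_lintegral_of_dominated_convergence' (fun a => (‖u a‖₊ : ℝ≥0∞) ^ (2 : ℝ))
    · intro n
      have hum : AEMeasurable (fun a => (‖u a‖₊ : ℝ≥0∞) ^ (2 : ℝ)) μ :=
        by simpa only [enorm_eq_nnnorm] using (hu.aestronglyMeasurable.enorm).pow_const (2 : ℝ)
      exact hum.indicator ((MeasurableSet.iUnion hC).diff (hC n))
    · intro n
      filter_upwards with a
      exact Set.indicator_le_self _ _ a
    · have := lintegral_rpow_enorm_lt_top_of_eLpNorm_lt_top h2 h2' hu.2
      simpa [ENNReal.toReal_ofNat, enorm_eq_nnnorm] using this.ne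
    · filter_upwards with a
      by_cases haA : a ∈ A
      · rcases Set.mem_iUnion.mp haA with ⟨N, hN⟩
        apply tendsto_nhds_of_eventually_eq
        filter_upwards [eventually_ge_atTop N] with n hn
        have : a ∉ A \ C n := fun h => h.2 (hmono hn hN)
        simp [this]
      · apply tendsto_nhds_of_eventually_eq
        filter_upwards with n
        have : a ∉ A \ C n := fun h => haA h.1
        simp [this]
  rw [lintegral_zero] at hlim
  have hc : Tendsto (fun x : ℝ≥0∞ => x ^ (1 / (2 : ℝ))) (𝓝 0) (𝓝 ((0 : ℝ≥0∞) ^ (1 / (2 : ℝ)))) :=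
    ENNReal.continuous_rpow_const.tendsto 0
  have := hc.comp hlim
  simpa [ENNReal.zero_rpow_of_pos, Function.comp_def] using this

/-- if a norm-preserving, additive, conjugate-homogeneous involution `S` of
`L²(X, μ; E)` intertwines multiplication by `χ_{X_k}` with multiplication by `χ_{X ∖ X_k}`
for every `k`, then it intertwines multiplication by `χ_A` with multiplication by `χ_{1-A}`
for every measurable `A ⊆ X`. -/
theorem conj_involution_indicator_flip
    {E : Type*} [NormedAddCommGroup E] [InnerProductSpace ℂ E] [CompleteSpace E]
    (μ : Measure GWX) [SigmaFinite μ]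
    (S : Lp E 2 μ → Lp E 2 μ)
    (hnorm : ∀ f, ‖S f‖ = ‖f‖)
    (hadd : ∀ f g, S (f + g) = S f + S g)
    (hconj : ∀ (α : ℂ) (f : Lp E 2 μ), S (α • f) = (starRingEnd ℂ) α • S f)
    (hinv : ∀ f, S (S f) = f)
    (hXk : ∀ (k : ℕ) (f g : Lp E 2 μ),
      (↑g : GWX → E) =ᵐ[μ] ({x : GWX | x k = 1}).indicator ↑f →
      (↑(S g) : GWX → E) =ᵐ[μ] ({x : GWX | x k = 1})ᶜ.indicator ↑(S f)) :
    ∀ (A : Set GWX), MeasurableSet A → ∀ (f g : Lp E 2 μ),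
      (↑g : GWX → E) =ᵐ[μ] A.indicator ↑f →
      (↑(S g) : GWX → E) =ᵐ[μ] (gwFlip '' A).indicator ↑(S f) := by
  classical
  have hS0 : S 0 = 0 := by
    have h := hadd 0 0
    rw [add_zero] at h
    nth_rewrite 1 [← add_zero (S 0)] at h
    exact (add_left_cancel h).symm
  have hsub : ∀ f g, S (f - g) = S f - S g := by
    intro f g
    have h := hadd (f - g) g
    have he : f - g + g = f := by abel
    rw [he] at h
    exact eq_sub_of_add_eq h.symm
  set P : Set GWX → Prop := fun A => ∀ f g : Lp E 2 μ,
    (↑g : GWX → E) =ᵐ[μ] A.indicator ↑f →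
    (↑(S g) : GWX → E) =ᵐ[μ] (gwFlip '' A).indicator ↑(S f) with hPdef
  have hindcongr : ∀ (s : Set GWX) (u v : GWX → E), u =ᵐ[μ] v →
      s.indicator u =ᵐ[μ] s.indicator v := by
    intro s u v h
    filter_upwards [h] with x hx
    by_cases hxs : x ∈ s <;>
      simp [hxs, Set.indicator_of_mem, Set.indicator_of_notMem, hx]
  have hempty : P ∅ := by
    intro f g hg
    have hg0 : ⇑g =ᵐ[μ] ⇑(0 : Lp E 2 μ) := by
      refine hg.trans ?_
      simp only [Set.indicator_empty]
      exact (Lp.coeFn_zero E 2 μ).symm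
    have hgz : g = 0 := Lp.ext hg0
    rw [hgz, hS0]
    refine (Lp.coeFn_zero E 2 μ).trans ?_
    refine Filter.EventuallyEq.of_eq ?_
    funext x
    simp
  have hcompl : ∀ t, MeasurableSet t → P t → P tᶜ := by
    intro t ht hPt f g hg
    set h := ((Lp.memLp f).indicator ht).toLp (t.indicator ⇑f) with hh_def
    have hh : ⇑h =ᵐ[μ] t.indicator ⇑f := MemLp.coeFn_toLp _
    have hgf : g = f - h := by
      apply Lp.ext
      refine hg.trans (EventuallyEq.trans ?_ (Lp.coeFn_sub f h).symm)
      filter_upwards [hh] with x hx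
      rw [Set.indicator_compl]
      simp [hx]
    have hSh := hPt f h hh
    rw [hgf, hsub]
    refine (Lp.coeFn_sub (S f) (S h)).trans ?_
    filter_upwards [hSh] with x hx
    rw [gwFlip_image_compl, Set.indicator_compl]
    simp [hx]
  have hinter : ∀ A B, MeasurableSet B → P A → P B → P (A ∩ B) := by
    intro A B hB hPA hPB f g hg
    set h := ((Lp.memLp f).indicator hB).toLp (B.indicator ⇑f) with hh_def
    have hh : ⇑h =ᵐ[μ] B.indicator ⇑f := MemLp.coeFn_toLp _
    have e1 : (A ∩ B).indicator ⇑f = A.indicator (B.indicator ⇑f) :=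
      (Set.indicator_indicator A B ⇑f).symm
    have hg' : ⇑g =ᵐ[μ] A.indicator ⇑h :=
      hg.trans ((Filter.EventuallyEq.of_eq e1).trans (hindcongr A _ _ hh.symm))
    have h1 := hPA h g hg'
    have h2 := hPB f h hh
    refine h1.trans ?_
    refine EventuallyEq.trans (hindcongr _ _ _ h2) ?_
    apply Filter.EventuallyEq.of_eq
    rw [Set.indicator_indicator, ← gwFlip_image_inter]
  have hunion2 : ∀ A B, MeasurableSet A → MeasurableSet B → P A → P B → P (A ∪ B) := by
    intro A B hA hB hPA hPB
    have he : A ∪ B = (Aᶜ ∩ Bᶜ)ᶜ := by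
      rw [Set.compl_inter, compl_compl, compl_compl]
    rw [he]
    exact hcompl _ (hA.compl.inter hB.compl)
      (hinter _ _ hB.compl (hcompl _ hA hPA) (hcompl _ hB hPB))
  have hUnion : ∀ (s : ℕ → Set GWX), (∀ n, MeasurableSet (s n)) →
      (∀ n, P (s n)) → P (⋃ i, s i) := by
    intro s hs hPs
    have hacc_meas : ∀ n, MeasurableSet (Set.accumulate s n) := fun n =>
      MeasurableSet.biUnion (Set.to_countable _) fun i _ => hs i
    have hacc_P : ∀ n, P (Set.accumulate s n) := by
      intro n
      induction n with
      | zero =>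
        have he : Set.accumulate s 0 = s 0 := by
          ext x; simp [Set.mem_accumulate, Nat.le_zero]
        rw [he]; exact hPs 0
      | succ n ih =>
        have he : Set.accumulate s (n + 1) = Set.accumulate s n ∪ s (n + 1) := by
          ext x
          simp only [Set.mem_accumulate, Set.mem_union]
          constructor
          · rintro ⟨y, hy, hxy⟩
            rcases eq_or_lt_of_le hy with rfl | hy'
            · exact Or.inr hxy
            · exact Or.inl ⟨y, Nat.lt_succ_iff.mp hy', hxy⟩
          · rintro (⟨y, hy, hxy⟩ | hx)
            · exact ⟨y, hy.trans (Nat.le_succ n), hxy⟩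
            · exact ⟨n + 1, le_rfl, hx⟩
        rw [he]
        exact hunion2 _ _ (hacc_meas n) (hs (n + 1)) ih (hPs (n + 1))
    intro f g hg
    set A := ⋃ i, s i with hAdef
    have hA : MeasurableSet A := MeasurableSet.iUnion hs
    have hAacc : A = ⋃ n, Set.accumulate s n := Set.iUnion_accumulate.symm
    set h : ℕ → Lp E 2 μ := fun n =>
      ((Lp.memLp f).indicator (hacc_meas n)).toLp ((Set.accumulate s n).indicator ⇑f)
      with hhdef
    have hh : ∀ n, ⇑(h n) =ᵐ[μ] (Set.accumulate s n).indicator ⇑f := fun n =>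
      MemLp.coeFn_toLp _
    set D : ℕ → Set GWX := fun n => gwFlip '' Set.accumulate s n with hDdef
    have hDmeas : ∀ n, MeasurableSet (D n) := fun n => by
      rw [hDdef]
      simp only [gwFlip_image]
      exact gwFlip_measurable (hacc_meas n)
    have hDmono : Monotone D := fun a b hab =>
      Set.image_mono (Set.monotone_accumulate hab)
    have hDunion : (⋃ n, D n) = gwFlip '' A := by
      rw [hDdef]
      rw [← Set.image_iUnion, Set.iUnion_accumulate, ← hAdef]
    set j : ℕ → Lp E 2 μ := fun n =>
      ((Lp.memLp (S f)).indicator (hDmeas n)).toLp ((D n).indicator ⇑(S f)) with hjdef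
    have hjcoe : ∀ n, ⇑(j n) =ᵐ[μ] (D n).indicator ⇑(S f) := fun n => MemLp.coeFn_toLp _
    have hSh : ∀ n, S (h n) = j n := fun n =>
      Lp.ext ((hacc_P n f (h n) (hh n)).trans (hjcoe n).symm)
    have hmemA : MemLp (A.indicator ⇑f) 2 μ := (Lp.memLp f).indicator hA
    have hgeq : g = hmemA.toLp (A.indicator ⇑f) := Lp.ext (hg.trans hmemA.coeFn_toLp.symm)
    have hglim : Tendsto h atTop (𝓝 g) := by
      rw [hgeq, hhdef]
      refine (Lp.tendsto_Lp_iff_tendsto_eLpNorm''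
        (fun n => (Set.accumulate s n).indicator ⇑f)
        (fun n => (Lp.memLp f).indicator (hacc_meas n))
        (A.indicator ⇑f) hmemA).mpr ?_
      have ht := gw_tendsto_ind (⇑f) (Lp.memLp f) (Set.accumulate s) hacc_meas
        Set.monotone_accumulate
      rw [Set.iUnion_accumulate] at ht
      simp only [← hAdef] at ht
      refine ht.congr fun n => ?_
      rw [eLpNorm_sub_comm]
    have hflipA_meas : MeasurableSet (gwFlip '' A) := by
      rw [gwFlip_image]; exact gwFlip_measurable hA
    have hmemFA : MemLp ((gwFlip '' A).indicator ⇑(S f)) 2 μ :=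
      (Lp.memLp (S f)).indicator hflipA_meas
    have hjlim : Tendsto j atTop (𝓝 (hmemFA.toLp ((gwFlip '' A).indicator ⇑(S f)))) := by
      rw [hjdef]
      refine (Lp.tendsto_Lp_iff_tendsto_eLpNorm''
        (fun n => (D n).indicator ⇑(S f))
        (fun n => (Lp.memLp (S f)).indicator (hDmeas n))
        ((gwFlip '' A).indicator ⇑(S f)) hmemFA).mpr ?_
      have ht := gw_tendsto_ind (⇑(S f)) (Lp.memLp (S f)) D hDmeas hDmono
      rw [hDunion] at ht
      refine ht.congr fun n => ?_
      rw [eLpNorm_sub_comm]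
    have hScont : Tendsto (fun n => S (h n)) atTop (𝓝 (S g)) := by
      rw [tendsto_iff_dist_tendsto_zero]
      have hd : ∀ n, dist (S (h n)) (S g) = dist (h n) g := by
        intro n
        rw [dist_eq_norm, dist_eq_norm, ← hsub (h n) g, hnorm]
      simp only [hd]
      rw [← tendsto_iff_dist_tendsto_zero]
      exact hglim
    have hSheq : (fun n => S (h n)) = j := funext hSh
    rw [hSheq] at hScont
    have hfinal : S g = hmemFA.toLp ((gwFlip '' A).indicator ⇑(S f)) :=
      tendsto_nhds_unique hScont hjlim
    rw [hfinal]
    exact hmemFA.coeFn_toLp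
  intro A hA
  have hle : MeasurableSpace.generateFrom gwGen ≤ (MeasurableSpace.pi : MeasurableSpace GWX) :=
    gwGen_eq.ge
  have hge : (MeasurableSpace.pi : MeasurableSpace GWX) ≤ MeasurableSpace.generateFrom gwGen :=
    gwGen_eq.le
  have hA' : MeasurableSet[MeasurableSpace.generateFrom gwGen] A := hge A hA
  refine MeasurableSpace.generateFrom_induction gwGen (fun s _ => P s) ?_ hempty ?_ ?_ A hA'
  · rintro t ⟨k, rfl⟩ -
    intro f g hg
    have := hXk k f g hg
    rwa [gwFlip_image_cyl]
  · intro t htgen hPt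
    have htm : MeasurableSet t := hle t htgen
    exact hcompl t htm hPt
  · intro u hu hPu
    have hum : ∀ n, MeasurableSet (u n) := fun n => hle (u n) (hu n)
    exact hUnion u hum hPu
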